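/- Let φ be the 2-cocycle on infinite matrices given by φ(E_{ij}, E_{kl}) = δ_{il}δ_{jk}(𝟙[j<0, i≥0] − 𝟙[i<0, j≥0]). Under the embedding of the Weyl algebra into matrices sending p_m(k) = (1/m!)pᵐtᵏ to (-1)ᵐ Σᵢ C(i+m,m) E_{i,i+m-k}, the restriction of φ satisfies φ(p_m(k), p_n(l)) = δ_{m+n, k+l} · (-1)ᵐ · m! · n! / (m!·n!) · C(k, m+n+1), i.e. φ(p_m(k), p_n(l)) = δ_{m+n,k+l} (-1)ᵐ C(k, m+n+1). -/

import Mathlib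

/-- The sign entering the cocycle: 1 if j < 0 ≤ i, -1 if i < 0 ≤ j, 0 otherwise. -/
def glSgn (i j : ℤ) : ℤ :=
  if j < 0 ∧ 0 ≤ i then 1 else if i < 0 ∧ 0 ≤ j then -1 else 0

/-- The 2-cocycle φ(A,B) = Σ_{i,j} A_{ij} B_{ji} glSgn i j, extended to band matrices
(the sum has finitely many nonzero terms for band matrices). -/
noncomputable def bandPhi {k : Type*} [Field k] (A B : ℤ → ℤ → k) : k :=
  ∑ᶠ (i : ℤ) (j : ℤ), A i j * B j i * ((glSgn i j : ℤ) : k)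

/-- The image of p_m(n) = (1/m!)pᵐtⁿ in infinite matrices:
(-1)ᵐ Σ_{i∈ℤ} C(i+m,m) E_{i,i+m-n}. -/
noncomputable def pMat {k : Type*} [Field k] (m : ℕ) (n : ℤ) : ℤ → ℤ → k :=
  fun i j => if j = i + m - n then (-1 : k) ^ m * ((Ring.choose (i + m) m : ℤ) : k) else 0

section Aux
open Finset

lemma ringChoose_neg (x : ℤ) (hx : x < 0) (kk : ℕ) :
    Ring.choose x kk = (-1) ^ kk * ((kk - 1 - x).toNat.choose kk : ℤ) := by
  cases kk with
  | zero => simp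
  | succ K =>
    obtain ⟨t, ht⟩ := Int.eq_negSucc_of_lt_zero (show x - (K+1 : ℕ) + 1 < 0 by push_cast; omega)
    have h1 : Ring.choose x (K+1) = Int.multichoose (x - (K+1 : ℕ) + 1) (K+1) := rfl
    rw [h1, ht, Int.multichoose]
    have h2 : ((K+1 : ℕ) - 1 - x).toNat = t + 1 := by
      have := Int.negSucc_eq t ▸ ht
      push_cast at this ⊢
      omega
    rw [h2, Int.coe_negOnePow_natCast]

lemma ringChoose_negSucc (m i : ℕ) :
    Ring.choose (-(m+1) : ℤ) i = (-1) ^ i * ((m + i).choose i : ℤ) := by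
  rw [ringChoose_neg _ (by omega)]
  have : ((i:ℤ) - 1 - -(↑m + 1)).toNat = m + i := by omega
  rw [this]

/-- Key identity: ∑_{i=0}^{K} C(m+i,m) C(n+K-i,n) = C(m+n+K+1, m+n+1). -/
lemma keyNat (m n K : ℕ) :
    ∑ i ∈ range (K + 1), (m + i).choose m * (n + (K - i)).choose n
      = (m + n + K + 1).choose (m + n + 1) := by
  have hv := Ring.add_choose_eq (R := ℤ) (r := -(m+1)) (s := -(n+1)) K (Commute.all _ _)
  have hL : (-(m+1) : ℤ) + -(n+1) = -((m+n+1 : ℕ)+1) := by push_cast; ring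
  rw [hL, ringChoose_negSucc, Finset.Nat.sum_antidiagonal_eq_sum_range_succ_mk] at hv
  simp only [ringChoose_negSucc] at hv
  have hv2 : ((-1:ℤ))^K * ((m+n+1+K).choose K : ℤ)
      = (-1)^K * ∑ i ∈ range (K+1), ((m+i).choose i * (n+(K-i)).choose (K-i) : ℤ) := by
    rw [hv, Finset.mul_sum]
    refine sum_congr rfl fun i hi => ?_
    simp only [mem_range] at hi
    have hpow : (-1:ℤ)^i * (-1)^(K-i) = (-1)^K := by
      rw [← pow_add]; congr 1; omega
    calc (-1:ℤ)^i * ((m+i).choose i : ℤ) * ((-1)^(K-i) * ((n+(K-i)).choose (K-i) : ℤ))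
        = ((-1:ℤ)^i * (-1)^(K-i)) * (((m+i).choose i : ℤ) * ((n+(K-i)).choose (K-i) : ℤ)) := by
          ring
      _ = (-1:ℤ)^K * (((m+i).choose i : ℤ) * ((n+(K-i)).choose (K-i) : ℤ)) := by rw [hpow]
  have hv3 := mul_left_cancel₀ (pow_ne_zero K (by norm_num : (-1:ℤ) ≠ 0)) hv2
  have hv4 : (m+n+1+K).choose K = ∑ i ∈ range (K+1), (m+i).choose i * (n+(K-i)).choose (K-i) := by
    exact_mod_cast hv3
  calc ∑ i ∈ range (K+1), (m+i).choose m * (n+(K-i)).choose n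
      = ∑ i ∈ range (K+1), (m+i).choose i * (n+(K-i)).choose (K-i) := by
        refine sum_congr rfl fun i hi => ?_
        rw [Nat.choose_symm_add, Nat.choose_symm_add]
    _ = (m+n+1+K).choose K := hv4.symm
    _ = (m+n+K+1).choose (m+n+1) := by
        rw [show m+n+K+1 = m+n+1+K from by ring]
        exact Nat.choose_symm_add.symm

/-- ∑_{i<D} C(m+i,m) C(D-1-i, n) = C(m+D, m+n+1). -/
lemma keyNat' (m n D : ℕ) :
    ∑ i ∈ range D, (m + i).choose m * (D - 1 - i).choose n
      = (m + D).choose (m + n + 1) := by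
  rcases le_or_gt D n with hD | hD
  · rw [Nat.choose_eq_zero_of_lt (show m + D < m + n + 1 by omega)]
    exact Finset.sum_eq_zero fun i hi => by
      simp only [mem_range] at hi
      exact mul_eq_zero_of_right _ (Nat.choose_eq_zero_of_lt (by omega))
  · set K := D - 1 - n with hK
    have hDK : D = n + K + 1 := by omega
    rw [← Finset.sum_subset (Finset.range_subset_range.mpr (show K + 1 ≤ D by omega))
      (fun i hi hni => ?_)]
    · rw [Finset.sum_congr rfl (fun i hi => ?_), keyNat m n K, show m+n+K+1 = m+D by omega]
      simp only [mem_range] at hi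
      congr 2
      omega
    · simp only [mem_range] at hi hni
      exact mul_eq_zero_of_right _ (Nat.choose_eq_zero_of_lt (by omega))

/-- ∑_{u<D} C(u,m) C(n+(D-1-u), n) = C(n+D, m+n+1). -/
lemma keyNat2 (m n D : ℕ) :
    ∑ u ∈ range D, u.choose m * (n + (D - 1 - u)).choose n
      = (n + D).choose (m + n + 1) := by
  rcases le_or_gt D m with hD | hD
  · rw [Nat.choose_eq_zero_of_lt (show n + D < m + n + 1 by omega)]
    exact Finset.sum_eq_zero fun u hu => by
      simp only [mem_range] at hu
      exact mul_eq_zero_of_left (Nat.choose_eq_zero_of_lt (by omega)) _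
  · set K := D - 1 - m with hK
    have hDK : D = m + K + 1 := by omega
    rw [Finset.range_eq_Ico,
      ← Finset.sum_subset (Finset.Ico_subset_Ico (Nat.zero_le m) le_rfl :
        Finset.Ico m D ⊆ Finset.Ico 0 D) (fun u hu hnu => ?_)]
    · rw [Finset.sum_Ico_eq_sum_range, show D - m = K + 1 from by omega]
      rw [Finset.sum_congr rfl (fun i hi => ?_), keyNat m n K,
        show m+n+K+1 = n+D by omega]
      simp only [mem_range] at hi
      congr 2
      omega
    · simp only [mem_Ico] at hu hnu
      exact mul_eq_zero_of_left (Nat.choose_eq_zero_of_lt (by omega)) _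

lemma ringChoose_nonneg (x : ℤ) (hx : 0 ≤ x) (kk : ℕ) :
    Ring.choose x kk = (x.toNat.choose kk : ℤ) := by
  conv_lhs => rw [show x = (x.toNat : ℤ) from (Int.toNat_of_nonneg hx).symm]
  rw [Ring.choose_natCast]

lemma sum_Icc_int (f : ℤ → ℤ) (lo hi : ℤ) :
    ∑ i ∈ Finset.Icc lo hi, f i = ∑ j ∈ range (hi + 1 - lo).toNat, f (lo + j) := by
  refine Finset.sum_nbij' (fun i => (i - lo).toNat) (fun j => lo + j) ?_ ?_ ?_ ?_ ?_
  · intro i hi; simp only [Finset.mem_Icc] at hi; simp only [mem_range]; omega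
  · intro j hj; simp only [mem_range] at hj; simp only [Finset.mem_Icc]; omega
  · intro i hi; simp only [Finset.mem_Icc] at hi; omega
  · intro j hj; simp only [mem_range] at hj; omega
  · intro i hi; simp only [Finset.mem_Icc] at hi
    congr 1; omega

/-- Case a > m. -/
lemma caseB (m n : ℕ) (a : ℤ) (ha : (m:ℤ) < a) :
    ∑ i ∈ Finset.Icc (0:ℤ) (a - m - 1),
        Ring.choose (i + m) m * Ring.choose (i + m - a + n) n
      = (-1)^n * Ring.choose a (m+n+1) := by
  set D := (a - m).toNat with hD
  have haD : a = (m:ℤ) + D := by omega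
  rw [sum_Icc_int, show (a - m - 1 + 1 - 0).toNat = D from by omega]
  have hterm : ∀ j ∈ range D, Ring.choose ((0:ℤ) + j + m) m * Ring.choose ((0:ℤ) + j + m - a + n) n
      = (-1)^n * (((m + j).choose m * (D - 1 - j).choose n : ℕ) : ℤ) := by
    intro j hj
    simp only [mem_range] at hj
    have h1 : Ring.choose ((0:ℤ) + j + m) m = (((m+j).choose m : ℕ) : ℤ) := by
      rw [ringChoose_nonneg _ (by omega)]
      congr 2; omega
    rcases lt_or_ge ((0:ℤ) + j + m - a + n) 0 with hx | hx
    · rw [h1, ringChoose_neg _ hx]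
      have : ((n:ℤ) - 1 - ((0:ℤ) + j + m - a + n)).toNat = D - 1 - j := by omega
      rw [this]; push_cast; ring
    · rw [h1, ringChoose_nonneg _ hx]
      have h2 : ((0:ℤ) + j + m - a + n).toNat.choose n = 0 :=
        Nat.choose_eq_zero_of_lt (by omega)
      have h3 : (D - 1 - j).choose n = 0 := Nat.choose_eq_zero_of_lt (by omega)
      rw [h2, h3]; push_cast; ring
  rw [Finset.sum_congr rfl hterm, ← Finset.mul_sum, ← Nat.cast_sum, keyNat' m n D,
    ringChoose_nonneg _ (by omega), show a.toNat = m + D from by omega]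

/-- Case a < m. -/
lemma caseA (m n : ℕ) (a : ℤ) (ha : a < (m:ℤ)) :
    ∑ i ∈ Finset.Icc (a - m) (-1:ℤ),
        Ring.choose (i + m) m * Ring.choose (i + m - a + n) n
      = -((-1:ℤ)^n) * Ring.choose a (m+n+1) := by
  set D := ((m:ℤ) - a).toNat with hD
  have haD : a = (m:ℤ) - D := by omega
  rw [sum_Icc_int, show ((-1:ℤ) + 1 - (a - m)).toNat = D from by omega]
  have hterm : ∀ j ∈ range D,
      Ring.choose (a - m + j + m) m * Ring.choose (a - m + j + m - a + n) n
      = (-1)^m * (((D - 1 - j).choose m * (n + j).choose n : ℕ) : ℤ) := by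
    intro j hj
    simp only [mem_range] at hj
    have h2 : Ring.choose (a - m + j + m - a + n) n = (((n + j).choose n : ℕ) : ℤ) := by
      rw [ringChoose_nonneg _ (by omega)]
      congr 2; omega
    rcases lt_or_ge (a - m + j + m) 0 with hx | hx
    · rw [h2, ringChoose_neg _ hx]
      have : ((m:ℤ) - 1 - (a - m + j + m)).toNat = D - 1 - j := by omega
      rw [this]; push_cast; ring
    · rw [h2, ringChoose_nonneg _ hx]
      have h1 : (a - m + j + m).toNat.choose m = 0 := Nat.choose_eq_zero_of_lt (by omega)
      have h3 : (D - 1 - j).choose m = 0 := Nat.choose_eq_zero_of_lt (by omega)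
      rw [h1, h3]; push_cast; ring
  rw [Finset.sum_congr rfl hterm, ← Finset.mul_sum, ← Nat.cast_sum]
  have hrefl : ∑ j ∈ range D, (D - 1 - j).choose m * (n + j).choose n
      = ∑ u ∈ range D, u.choose m * (n + (D - 1 - u)).choose n := by
    rw [← Finset.sum_range_reflect (fun u => u.choose m * (n + (D - 1 - u)).choose n) D]
    refine Finset.sum_congr rfl fun j hj => ?_
    simp only [mem_range] at hj
    congr 2
    omega
  rw [hrefl, keyNat2 m n D]
  rcases lt_or_ge a 0 with hha | hha
  · rw [ringChoose_neg _ hha,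
      show (((m+n+1 : ℕ):ℤ) - 1 - a).toNat = n + D from by push_cast; omega]
    have h2 : ((-1:ℤ))^n * (-1)^n = 1 := by
      rw [← pow_add, ← two_mul, pow_mul]; norm_num
    have h3 : (-1:ℤ)^(m+n+1) = (-1)^m * (-1)^n * (-1) := by
      rw [pow_succ, pow_add]
    rw [h3]
    linear_combination (-(((n+D).choose (m+n+1) : ℤ)) * (-1:ℤ)^m) * h2
  · have h0 : (n + D).choose (m+n+1) = 0 := Nat.choose_eq_zero_of_lt (by omega)
    have h1 : a.toNat.choose (m+n+1) = 0 := Nat.choose_eq_zero_of_lt (by omega)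
    rw [h0, ringChoose_nonneg _ hha, h1]
    simp

end Aux

/-- Restriction of the 2-cocycle φ to the image of the Weyl algebra:
φ(p_m(k), p_n(l)) = δ_{m+n, k+l} (-1)ᵐ C(k, m+n+1). -/
theorem stmt_9 (k : Type*) [Field k] [CharZero k] :
    ∀ (m n : ℕ) (a b : ℤ),
      bandPhi (pMat (k := k) m a) (pMat (k := k) n b) =
        if ((m + n : ℕ) : ℤ) = a + b
        then (-1 : k) ^ m * ((Ring.choose a (m + n + 1) : ℤ) : k)
        else 0 := by
  intro m n a b
  unfold bandPhi
  have hinner : ∀ i : ℤ,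
      (∑ᶠ j : ℤ, pMat (k := k) m a i j * pMat (k := k) n b j i * ((glSgn i j : ℤ) : k))
      = pMat (k := k) m a i (i + m - a) * pMat (k := k) n b (i + m - a) i *
          ((glSgn i (i + m - a) : ℤ) : k) := by
    intro i
    refine finsum_eq_single _ (i + (m : ℤ) - a) fun j hj => ?_
    have hz : pMat (k := k) m a i j = 0 := by
      unfold pMat; rw [if_neg hj]
    rw [hz, zero_mul, zero_mul]
  rw [finsum_congr hinner]
  by_cases h : ((m + n : ℕ) : ℤ) = a + b
  · rw [if_pos h]
    push_cast at h
    -- each term as a cast of an integer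
    set G : ℤ → ℤ := fun i =>
      (-1)^m * Ring.choose (i + m) m * ((-1)^n * Ring.choose (i + m - a + n) n) *
        glSgn i (i + m - a) with hG
    have hF : ∀ i : ℤ,
        pMat (k := k) m a i (i + m - a) * pMat (k := k) n b (i + m - a) i *
          ((glSgn i (i + m - a) : ℤ) : k) = ((G i : ℤ) : k) := by
      intro i
      unfold pMat
      rw [if_pos rfl, if_pos (by omega)]
      have harg : ((i + (m:ℤ) - a) + n) = i + m - a + n := by ring
      rw [harg, hG]
      push_cast
      ring
    rw [finsum_congr hF]
    -- support
    set S : Finset ℤ := Finset.Icc (a - m) (-1) ∪ Finset.Icc 0 (a - m - 1) with hS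
    have hsupp : (Function.support fun i => ((G i : ℤ) : k)) ⊆ (S : Set ℤ) := by
      intro i hi
      simp only [Function.mem_support] at hi
      have hGi : G i ≠ 0 := fun hz => hi (by rw [hz]; simp)
      have hsgn : glSgn i (i + m - a) ≠ 0 := by
        intro hz
        exact hGi (by rw [hG]; simp only; rw [hz, mul_zero])
      unfold glSgn at hsgn
      simp only [Finset.coe_union, Set.mem_union, Finset.coe_Icc, Set.mem_Icc, hS]
      split_ifs at hsgn with h1 h2
      · right; omega
      · left; omega
      · exact absurd rfl hsgn
    rw [finsum_eq_finset_sum_of_support_subset _ hsupp]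
    have hcast : ∑ i ∈ S, ((G i : ℤ) : k) = (((∑ i ∈ S, G i : ℤ)) : k) := by
      push_cast; rfl
    rw [hcast]
    rw [show ((-1 : k) ^ m * ((Ring.choose a (m + n + 1) : ℤ) : k))
        = ((((-1)^m * Ring.choose a (m + n + 1) : ℤ)) : k) from by push_cast; ring]
    congr 1
    -- now a pure ℤ identity
    rcases lt_trichotomy a (m : ℤ) with hc | hc | hc
    · have hempty : Finset.Icc (0:ℤ) (a - m - 1) = ∅ := Finset.Icc_eq_empty (by omega)
      rw [hS, hempty, Finset.union_empty]
      have hval : ∀ i ∈ Finset.Icc (a - (m:ℤ)) (-1:ℤ), G i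
          = (-((-1:ℤ)^m * (-1)^n)) * (Ring.choose (i + m) m * Ring.choose (i + m - a + n) n) := by
        intro i hi
        simp only [Finset.mem_Icc] at hi
        have : glSgn i (i + m - a) = -1 := by
          unfold glSgn; rw [if_neg (by omega), if_pos (by omega)]
        rw [hG]; simp only; rw [this]; ring
      rw [Finset.sum_congr rfl hval, ← Finset.mul_sum, caseA m n a hc]
      have h2 : ((-1:ℤ))^n * (-1)^n = 1 := by
        rw [← pow_add, ← two_mul, pow_mul]; norm_num
      linear_combination ((-1:ℤ)^m * Ring.choose a (m+n+1)) * h2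
    · -- a = m : all sgn zero and RHS zero
      have hval : ∀ i ∈ S, G i = 0 := by
        intro i _
        have : glSgn i (i + m - a) = 0 := by
          unfold glSgn; rw [if_neg (by omega), if_neg (by omega)]
        rw [hG]; simp only; rw [this, mul_zero]
      rw [Finset.sum_eq_zero hval]
      rw [hc, show Ring.choose ((m:ℤ)) (m+n+1) = ((Nat.choose m (m+n+1) : ℕ) : ℤ) from by
        rw [Ring.choose_natCast], Nat.choose_eq_zero_of_lt (by omega)]
      simp
    · have hempty : Finset.Icc (a - (m:ℤ)) (-1:ℤ) = ∅ := Finset.Icc_eq_empty (by omega)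
      rw [hS, hempty, Finset.empty_union]
      have hval : ∀ i ∈ Finset.Icc (0:ℤ) (a - m - 1), G i
          = (-1:ℤ)^m * (-1)^n * (Ring.choose (i + m) m * Ring.choose (i + m - a + n) n) := by
        intro i hi
        simp only [Finset.mem_Icc] at hi
        have : glSgn i (i + m - a) = 1 := by
          unfold glSgn; rw [if_pos (by omega)]
        rw [hG]; simp only; rw [this]; ring
      rw [Finset.sum_congr rfl hval, ← Finset.mul_sum, caseB m n a hc]
      have h2 : ((-1:ℤ))^n * (-1)^n = 1 := by
        rw [← pow_add, ← two_mul, pow_mul]; norm_num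
      linear_combination ((-1:ℤ)^m * Ring.choose a (m+n+1)) * h2
  · rw [if_neg h]
    push_cast at h
    have hzero : ∀ i : ℤ,
        pMat (k := k) m a i (i + m - a) * pMat (k := k) n b (i + m - a) i *
          ((glSgn i (i + m - a) : ℤ) : k) = 0 := by
      intro i
      have hz : pMat (k := k) n b (i + m - a) i = 0 := by
        unfold pMat; rw [if_neg (by omega)]
      rw [hz, mul_zero, zero_mul]
    rw [finsum_congr hzero, finsum_zero]
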